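/- The solution graph of a Horn formula φ without positive unit clauses is disconnected if and only if φ has a locally minimal nonzero solution. -/

import Mathlib

def SatClause {n : ℕ} (a : Fin n → Bool) (c : List (Fin n × Bool)) : Prop :=
  ∃ l ∈ c, (if l.2 then a l.1 else !(a l.1)) = true

def IsHornClause {n : ℕ} (c : List (Fin n × Bool)) : Prop :=
  (c.filter (fun l => l.2)).length ≤ 1

def Reach {ι : Type*} [Fintype ι] (S : Set (ι → Bool)) : (ι → Bool) → (ι → Bool) → Prop :=
  Relation.ReflTransGen (fun u v => u ∈ S ∧ v ∈ S ∧ hammingDist u v = 1)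

def Connected {ι : Type*} [Fintype ι] (S : Set (ι → Bool)) : Prop :=
  ∀ a ∈ S, ∀ b ∈ S, Reach S a b

-- auxiliary lemmas

lemma reach_symm {ι : Type*} [Fintype ι] (S : Set (ι → Bool)) {a b : ι → Bool}
    (h : Reach S a b) : Reach S b a := by
  refine (@Relation.ReflTransGen.stdSymm _ _ ⟨?_⟩).symm _ _ h
  intro u v ⟨h1, h2, h3⟩
  exact ⟨h2, h1, by rwa [hammingDist_comm]⟩

lemma dist_one_exists {n : ℕ} {x y : Fin n → Bool} (h : hammingDist x y = 1) :
    ∃ i, x i ≠ y i ∧ ∀ j ≠ i, x j = y j := by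
  rw [hammingDist, Finset.card_eq_one] at h
  obtain ⟨i, hi⟩ := h
  refine ⟨i, ?_, ?_⟩
  · have := Finset.mem_singleton_self i; rw [← hi] at this; simpa using this
  · intro j hj
    by_contra hc
    have : j ∈ ({i} : Finset (Fin n)) := by rw [← hi]; simpa using hc
    exact hj (Finset.mem_singleton.mp this)

lemma dist_one_of {n : ℕ} {x y : Fin n → Bool} (i : Fin n) (hne : x i ≠ y i)
    (heq : ∀ j ≠ i, x j = y j) : hammingDist x y = 1 := by
  rw [hammingDist, Finset.card_eq_one]
  refine ⟨i, ?_⟩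
  ext j
  simp only [Finset.mem_filter, Finset.mem_univ, true_and, Finset.mem_singleton]
  constructor
  · intro hj; by_contra hc; exact hj (heq j hc)
  · rintro rfl; exact hne

lemma bool_true_le {x y : Bool} (h : x ≤ y) (hx : x = true) : y = true := by
  subst hx; exact Bool.le_iff_imp.mp h rfl

lemma bool_le_false' {x : Bool} (h : x ≤ false) : x = false := by
  cases x
  · rfl
  · exact (Bool.le_iff_imp.mp h rfl).symm

lemma list_len_le_one {α : Type*} {l : List α} (h : l.length ≤ 1) {x y : α}
    (hx : x ∈ l) (hy : y ∈ l) : x = y := by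
  match l with
  | [] => simp at hx
  | [a] => simp at hx hy; rw [hx, hy]
  | a :: b :: t => simp at h

lemma meet_sat {n : ℕ} {a b : Fin n → Bool} {c : List (Fin n × Bool)}
    (hc : IsHornClause c) (ha : SatClause a c) (hb : SatClause b c) :
    SatClause (fun i => a i && b i) c := by
  obtain ⟨la, hla, hla2⟩ := ha
  obtain ⟨lb, hlb, hlb2⟩ := hb
  by_cases h1 : la.2
  · by_cases h2 : lb.2
    · have hmem1 : la ∈ c.filter (fun l => l.2) := List.mem_filter.mpr ⟨hla, by simp [h1]⟩
      have hmem2 : lb ∈ c.filter (fun l => l.2) := List.mem_filter.mpr ⟨hlb, by simp [h2]⟩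
      have heq : la = lb := list_len_le_one hc hmem1 hmem2
      subst heq
      refine ⟨la, hla, ?_⟩
      simp only [h1, if_true] at hla2 hlb2 ⊢
      simp [hla2, hlb2]
    · refine ⟨lb, hlb, ?_⟩
      simp only [Bool.not_eq_true] at h2
      simp only [h2] at hlb2 ⊢
      simp only [Bool.false_eq_true, if_false, Bool.not_eq_true'] at hlb2 ⊢
      simp [hlb2]
  · refine ⟨la, hla, ?_⟩
    simp only [Bool.not_eq_true] at h1
    simp only [h1] at hla2 ⊢
    simp only [Bool.false_eq_true, if_false, Bool.not_eq_true'] at hla2 ⊢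
    simp [hla2]

lemma reach_mem {ι : Type*} [Fintype ι] {S : Set (ι → Bool)} {a b : ι → Bool}
    (ha : a ∈ S) (h : Reach S a b) : b ∈ S := by
  induction h with
  | refl => exact ha
  | tail _ h2 _ => exact h2.2.1

theorem horn_disconnected_iff_locally_minimal_nonzero (n : ℕ)
    (φ : List (List (Fin n × Bool)))
    (hHorn : ∀ c ∈ φ, IsHornClause c)
    (hNoPosUnit : ∀ c ∈ φ, ∀ i : Fin n, c ≠ [(i, true)]) :
    let S : Set (Fin n → Bool) := {a | ∀ c ∈ φ, SatClause a c}
    (¬ Connected S ↔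
      ∃ a ∈ S, a ≠ (fun _ => false) ∧
        ∀ b ∈ S, hammingDist a b = 1 → ¬ b ≤ a) := by
  intro S
  classical
  -- zero is a solution once S is nonempty
  have hzero : ∀ a, a ∈ S → (fun _ => false) ∈ S := by
    intro a ha c hc
    have hsat := ha c hc
    obtain ⟨l, hl, _⟩ := hsat
    -- c has some literal; find a negative literal in c
    by_cases hneg : ∃ m ∈ c, m.2 = false
    · obtain ⟨m, hm, hm2⟩ := hneg
      exact ⟨m, hm, by simp [hm2]⟩
    · -- all literals positive: c.filter = c, so c = [l] = [(l.1, true)]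
      push_neg at hneg
      have hall : ∀ m ∈ c, m.2 = true := by
        intro m hm; cases h : m.2 with
        | false => exact absurd h (hneg m hm)
        | true => rfl
      have hfil : c.filter (fun l => l.2) = c := by
        apply List.filter_eq_self.mpr
        intro m hm; simp [hall m hm]
      have hlen := hHorn c hc
      rw [IsHornClause, hfil] at hlen
      have hc1 : c = [l] := by
        rcases hcc : c with _ | ⟨x, _ | ⟨y, t⟩⟩
        · rw [hcc] at hl; simp at hl
        · rw [hcc] at hl; simp at hl; rw [hl]
        · rw [hcc] at hlen; simp only [List.length_cons] at hlen; omega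
      have : l = (l.1, true) := by
        have := hall l hl; exact Prod.ext rfl this
      exact absurd (by rw [hc1, this]) (hNoPosUnit c hc l.1)
  -- S is closed under pointwise meet
  have hmeet : ∀ a ∈ S, ∀ b ∈ S, (fun i => a i && b i) ∈ S := by
    intro a ha b hb c hc
    exact meet_sat (hHorn c hc) (ha c hc) (hb c hc)
  -- a locally minimal solution is below everything reachable from it
  have hlocmin_le : ∀ a ∈ S, (∀ b ∈ S, hammingDist a b = 1 → ¬ b ≤ a) →
      ∀ b, Reach S a b → a ≤ b := by
    intro a ha hmin b hreach
    induction hreach with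
    | refl => exact le_refl a
    | @tail v w h1 h2 ih =>
      obtain ⟨hv, hw, hd⟩ := h2
      obtain ⟨i, hi, hji⟩ := dist_one_exists hd
      intro j
      by_cases hj : j = i
      · subst hj
        cases haj : a j with
        | false => simp
        | true =>
          -- then v j = true, w j = false; a ∧ w contradicts local minimality
          exfalso
          have hvj : v j = true := bool_true_le (ih j) haj
          have hwj : w j = false := by
            cases h : w j with
            | false => rfl
            | true => exact absurd (by rw [hvj, h]) hi
          set a' : Fin n → Bool := fun k => a k && w k with ha'
          have ha'S : a' ∈ S := hmeet a ha w hw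
          have ha'le : a' ≤ a := fun k => by simp only [ha']; exact Bool.and_le_left _ _
          have heqa' : ∀ k ≠ j, a' k = a k := by
            intro k hk
            have hvw : v k = w k := hji k hk
            have := ih k
            simp only [ha']
            cases hak : a k with
            | false => simp
            | true =>
              have hvk : v k = true := bool_true_le (ih k) hak
              rw [← hvw, hvk]; simp
          have hdist : hammingDist a a' = 1 := by
            apply dist_one_of j
            · simp [ha', haj, hwj]
            · intro k hk; exact (heqa' k hk).symm
          exact hmin a' ha'S hdist ha'le
      · rw [← hji j hj]; exact ih j
  constructor
  · -- disconnected → exists locally minimal nonzero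
    intro hconn
    -- get a, b not reachable
    rw [Connected] at hconn
    push_neg at hconn
    obtain ⟨a, ha, b, hb, hab⟩ := hconn
    have h0 : (fun _ => false) ∈ S := hzero a ha
    -- one of a, b is not reachable from 0
    have key : ∃ x ∈ S, ¬ Reach S (fun _ => false) x := by
      by_contra hk
      push_neg at hk
      exact hab ((reach_symm S (hk a ha)).trans (hk b hb))
    obtain ⟨x, hx, hx0⟩ := key
    -- take minimal-weight element reachable from x
    set w : (Fin n → Bool) → ℕ := fun u => (Finset.univ.filter (fun i => u i = true)).card with hwdef
    set T : Set (Fin n → Bool) := {u | Reach S x u} with hT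
    have hTfin : T.Finite := Set.toFinite T
    have hTne : x ∈ hTfin.toFinset := by
      rw [Set.Finite.mem_toFinset]; exact Relation.ReflTransGen.refl
    obtain ⟨m, hm, hmin⟩ := Finset.exists_min_image hTfin.toFinset w ⟨x, hTne⟩
    rw [Set.Finite.mem_toFinset] at hm
    have hmS : m ∈ S := reach_mem hx hm
    refine ⟨m, hmS, ?_, ?_⟩
    · -- m ≠ 0
      rintro rfl
      exact hx0 (reach_symm S hm)
    · -- m locally minimal
      intro b' hb' hd hle
      have hb'T : b' ∈ hTfin.toFinset := by
        rw [Set.Finite.mem_toFinset]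
        exact hm.tail ⟨hmS, hb', hd⟩
      have hwle := hmin b' hb'T
      -- but w b' < w m since b' ≤ m and b' ≠ m
      have hne : b' ≠ m := by
        intro h; subst h; simp [hammingDist_self] at hd
      have hsub : (Finset.univ.filter (fun i => b' i = true)) ⊂
          (Finset.univ.filter (fun i => m i = true)) := by
        constructor
        · intro i hi
          simp only [Finset.mem_filter, Finset.mem_univ, true_and] at hi ⊢
          exact bool_true_le (hle i) hi
        · intro hcon
          apply hne
          funext i
          cases h1 : b' i with
          | true =>
            exact (bool_true_le (hle i) h1).symm
          | false =>
            cases h2 : m i with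
            | false => rfl
            | true =>
              exfalso
              have : i ∈ Finset.univ.filter (fun i => b' i = true) := by
                apply hcon; simp [h2]
              simp [h1] at this
      have : w b' < w m := Finset.card_lt_card hsub
      omega
  · -- exists locally minimal nonzero → disconnected
    rintro ⟨a, ha, hane, hmin⟩ hconn
    have h0 : (fun _ => false) ∈ S := hzero a ha
    have hr : Reach S a (fun _ => false) := hconn a ha _ h0
    have := hlocmin_le a ha hmin _ hr
    apply hane
    funext i
    exact bool_le_false' (this i)
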